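/- Suppose the base-b IFS defined by the alphabet A satisfies the strong separation condition, and let x ∈ F be a point whose (unique admissible) base-b expansion is uniformly de Bruijn. Then x is badly symbolically approximable: there exists κ > 0 such that for every rational r ∈ F ∩ ℚ, one has |x − r| ≥ κ / (q_sym · (log_b q_sym)^{1/δ}), where q_sym = H_sym(r) and δ = log k / log b. -/

import Mathlib

/-- The real number in `[0,1]` whose base-`b` digit sequence is `ω` (so that
`ω 0` is the first digit after the point). -/
noncomputable def baseVal (b : ℕ) (ω : ℕ → ℕ) : ℝ :=
  ∑' i : ℕ, (ω i : ℝ) / (b : ℝ) ^ (i + 1)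

/-- The initial segment of `ω` of length `A.card ^ n + n - 1` is a (non-cyclic)
de Bruijn sequence of order `n` in the alphabet `A`: every word of length `n`
over `A` occurs exactly once as a consecutive substring of that initial segment. -/
def dbPrefix (A : Finset ℕ) (n : ℕ) (ω : ℕ → ℕ) : Prop :=
  ∀ v : ℕ → ℕ, (∀ i < n, v i ∈ A) →
    ∃! j : ℕ, j + n ≤ A.card ^ n + n - 1 ∧ ∀ i < n, ω (j + i) = v i

/-- `B_ω`, the set of orders `n ≥ 1` for which the corresponding initial segment of `ω`
is a de Bruijn sequence of order `n`. -/
def deBruijnSet (A : Finset ℕ) (ω : ℕ → ℕ) : Set ℕ :=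
  {n | 0 < n ∧ dbPrefix A n ω}

/-- `ω` is uniformly de Bruijn: `B_ω` is infinite with bounded gap sizes. -/
def UniformlyDeBruijn (A : Finset ℕ) (ω : ℕ → ℕ) : Prop :=
  ∃ g : ℕ, ∀ N : ℕ, ∃ n ∈ deBruijnSet A ω, N < n ∧ n ≤ N + g

/-- `ω` is infinitely de Bruijn: `B_ω` is infinite. -/
def InfinitelyDeBruijn (A : Finset ℕ) (ω : ℕ → ℕ) : Prop :=
  (deBruijnSet A ω).Infinite

/-- `ω` is totally de Bruijn: `B_ω` contains every `n ≥ 1`. -/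
def TotallyDeBruijn (A : Finset ℕ) (ω : ℕ → ℕ) : Prop :=
  ∀ n : ℕ, 0 < n → dbPrefix A n ω

/-- The limit set `F` of the base-`b` IFS with digit alphabet `A`: all reals having at
least one base-`b` expansion with all digits in `A`. -/
def limitSet (b : ℕ) (A : Finset ℕ) : Set ℝ :=
  {x | ∃ ω : ℕ → ℕ, (∀ i, ω i ∈ A) ∧ x = baseVal b ω}

/-- The base-`b` IFS `S_i(x) = (i+x)/b`, `i ∈ A`, satisfies the strong separation
condition: `S_i(F) ∩ S_j(F) = ∅` for all `i ≠ j` in `A`, where `F` is the limit set. -/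
def StrongSep (b : ℕ) (A : Finset ℕ) : Prop :=
  ∀ i ∈ A, ∀ j ∈ A, i ≠ j →
    Disjoint ((fun x : ℝ => ((i : ℝ) + x) / (b : ℝ)) '' limitSet b A)
      ((fun x : ℝ => ((j : ℝ) + x) / (b : ℝ)) '' limitSet b A)

/-- `x` is badly symbolically approximable (with respect to `ψ_*`): there is `κ > 0`
such that `|x − r| ≥ κ / (q_sym · (log_b q_sym)^(1/δ))` for every rational `r ∈ F ∩ ℚ`,
where `q_sym = H_sym(r)`. Here the symbolic height is encoded by quantifying over all
preperiod/period pairs `(i, p)` of expansions of `r` with digits in `A` (the bound for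
the minimal such pair is equivalent to the bound for all of them, by monotonicity of
`q ↦ q(log_b q)^(1/δ)`). -/
noncomputable def BadlySymbolicallyApproximable (b : ℕ) (A : Finset ℕ) (δ : ℝ)
    (x : ℝ) : Prop :=
  ∃ κ : ℝ, 0 < κ ∧ ∀ (r : ℝ) (i p : ℕ), 0 < p →
    (∃ τ : ℕ → ℕ, (∀ t, τ t ∈ A) ∧ r = baseVal b τ ∧ ∀ t, i ≤ t → τ (t + p) = τ t) →
    κ / (((b : ℝ) ^ i * ((b : ℝ) ^ p - 1)) *
        Real.logb b ((b : ℝ) ^ i * ((b : ℝ) ^ p - 1)) ^ (1 / δ)) ≤ |x - r|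


lemma digit_div_eq {b : ℕ} (hb : 2 ≤ b) (c : ℝ) :
    (fun t : ℕ => c / (b : ℝ) ^ (t + 1)) =
      (fun t : ℕ => (c/(b:ℝ)) * (1/(b:ℝ)) ^ t) := by
  funext t
  rw [one_div, inv_pow, ← one_div, div_mul_div_comm, mul_one, ← pow_succ']

lemma summable_digit_div {b : ℕ} (hb : 2 ≤ b) {σ : ℕ → ℕ} (hσ : ∀ i, σ i < b) :
    Summable (fun i : ℕ => (σ i : ℝ) / (b : ℝ) ^ (i + 1)) := by
  have hb0 : (0:ℝ) < b := by positivity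
  have hb1 : (1:ℝ) < b := by exact_mod_cast hb.trans_lt' one_lt_two
  refine Summable.of_nonneg_of_le (fun i => by positivity) (fun i => ?_)
    (summable_geometric_of_lt_one (r := 1/(b:ℝ)) (by positivity) (by
      rw [div_lt_one hb0]; exact hb1))
  have h1 : (σ i : ℝ) ≤ b := by exact_mod_cast (hσ i).le
  have h2 : (1/(b:ℝ))^i = (b:ℝ)/(b:ℝ)^(i+1) := by
    rw [one_div, inv_pow, pow_succ]
    field_simp
  rw [h2]
  exact div_le_div_of_nonneg_right h1 (by positivity) |>.trans_eq rfl

lemma summable_const_div {b : ℕ} (hb : 2 ≤ b) (c : ℝ) :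
    Summable (fun t : ℕ => c / (b : ℝ) ^ (t + 1)) := by
  have hb0 : (0:ℝ) < b := by positivity
  have hb1 : (1:ℝ) < b := by exact_mod_cast hb.trans_lt' one_lt_two
  rw [digit_div_eq hb]
  exact (summable_geometric_of_lt_one (by positivity)
    (by rw [div_lt_one hb0]; exact hb1)).mul_left _

lemma tsum_const_div {b : ℕ} (hb : 2 ≤ b) (c : ℝ) :
    ∑' t : ℕ, c / (b : ℝ) ^ (t + 1) = c / ((b : ℝ) - 1) := by
  have hb0 : (0:ℝ) < b := by positivity
  have hb1 : (1:ℝ) < b := by exact_mod_cast hb.trans_lt' one_lt_two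
  have hne : (b:ℝ) - 1 ≠ 0 := by linarith
  have hbne : (b:ℝ) ≠ 0 := by linarith
  rw [show (fun t : ℕ => c / (b : ℝ) ^ (t + 1)) =
      (fun t : ℕ => (c/(b:ℝ)) * (1/(b:ℝ)) ^ t) from digit_div_eq hb c,
    tsum_mul_left, tsum_geometric_of_lt_one (by positivity)
      (by rw [div_lt_one hb0]; exact hb1)]
  have h1 : (1 : ℝ) - 1/b = ((b:ℝ)-1)/b := by field_simp
  rw [h1, inv_div]
  field_simp

lemma baseVal_le {b M : ℕ} (hb : 2 ≤ b) {σ : ℕ → ℕ} (hσb : ∀ i, σ i < b)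
    (hσM : ∀ i, σ i ≤ M) : baseVal b σ ≤ (M : ℝ) / ((b : ℝ) - 1) := by
  rw [baseVal, ← tsum_const_div hb (M:ℝ)]
  refine Summable.tsum_le_tsum (fun i => ?_) (summable_digit_div hb hσb) (summable_const_div hb _)
  have : (σ i : ℝ) ≤ M := by exact_mod_cast hσM i
  exact div_le_div_of_nonneg_right this (by positivity) |>.trans_eq rfl

lemma le_baseVal {b m : ℕ} (hb : 2 ≤ b) {σ : ℕ → ℕ} (hσb : ∀ i, σ i < b)
    (hσm : ∀ i, m ≤ σ i) : (m : ℝ) / ((b : ℝ) - 1) ≤ baseVal b σ := by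
  rw [baseVal, ← tsum_const_div hb (m:ℝ)]
  refine Summable.tsum_le_tsum (fun i => ?_) (summable_const_div hb _) (summable_digit_div hb hσb)
  have : (m : ℝ) ≤ σ i := by exact_mod_cast hσm i
  exact div_le_div_of_nonneg_right this (by positivity) |>.trans_eq rfl

lemma baseVal_shift {b : ℕ} (hb : 2 ≤ b) {σ : ℕ → ℕ} (hσ : ∀ i, σ i < b) :
    baseVal b σ = ((σ 0 : ℝ) + baseVal b (fun t => σ (t + 1))) / (b : ℝ) := by
  have hs := summable_digit_div hb hσ
  rw [baseVal, Summable.tsum_eq_zero_add hs]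
  have h : ∀ n : ℕ, (σ (n+1) : ℝ) / (b:ℝ) ^ (n + 1 + 1) =
      (1/(b:ℝ)) * ((σ (n+1) : ℝ) / (b:ℝ) ^ (n + 1)) := by
    intro n
    rw [pow_succ]
    ring
  rw [tsum_congr h, tsum_mul_left, baseVal]
  ring

lemma const_mem_limitSet {b : ℕ} (hb : 2 ≤ b) {A : Finset ℕ} {c : ℕ}
    (hc : c ∈ A) : baseVal b (fun _ => c) ∈ limitSet b A :=
  ⟨fun _ => c, fun _ => hc, rfl⟩

lemma baseVal_const {b c : ℕ} (hb : 2 ≤ b) :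
    baseVal b (fun _ => c) = (c : ℝ) / ((b : ℝ) - 1) := by
  rw [baseVal, tsum_const_div hb]

lemma sep_of_lt {b : ℕ} (hb : 2 ≤ b) {A : Finset ℕ} (hAb : A ⊆ Finset.range b)
    (hA : A.Nonempty) (hsep : StrongSep b A)
    {σ τ : ℕ → ℕ} (hσ : ∀ i, σ i ∈ A) (hτ : ∀ i, τ i ∈ A) (hlt : σ 0 < τ 0) :
    1 / ((b:ℝ) * ((b:ℝ) - 1)) ≤ baseVal b τ - baseVal b σ := by
  have hb0 : (0:ℝ) < b := by positivity
  have hb1 : (1:ℝ) < b := by exact_mod_cast hb.trans_lt' one_lt_two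
  have hbm1 : (0:ℝ) < (b:ℝ) - 1 := by linarith
  have hmemb : ∀ i ∈ A, i < b := fun i hi => Finset.mem_range.mp (hAb hi)
  have hσb : ∀ i, σ i < b := fun i => hmemb _ (hσ i)
  have hτb : ∀ i, τ i < b := fun i => hmemb _ (hτ i)
  set a0 := A.min' hA with ha0
  set aM := A.max' hA with haM
  have ha0M : a0 ≤ aM := A.min'_le _ (A.max'_mem hA)
  have haMb : aM < b := hmemb _ (A.max'_mem hA)
  -- shifted sequences
  have hTσ : baseVal b (fun t => σ (t+1)) ≤ (aM:ℝ)/((b:ℝ)-1) :=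
    baseVal_le hb (fun i => hσb (i+1)) (fun i => A.le_max' _ (hσ (i+1)))
  have hTτ : (a0:ℝ)/((b:ℝ)-1) ≤ baseVal b (fun t => τ (t+1)) :=
    le_baseVal hb (fun i => hτb (i+1)) (fun i => A.min'_le _ (hτ (i+1)))
  rw [baseVal_shift hb hσb, baseVal_shift hb hτb]
  rw [div_sub_div_same, show 1/((b:ℝ)*((b:ℝ)-1)) = (1/((b:ℝ)-1))/b by
    rw [div_div, mul_comm]]
  rw [div_le_div_iff_of_pos_right hb0]
  -- now: 1/(b-1) ≤ (τ0 + Tτ) - (σ0 + Tσ)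
  rcases le_or_gt (aM : ℕ) (b - 2 + a0) with hcase | hcase
  · -- aM - a0 ≤ b - 2
    have hc : (aM:ℝ) ≤ (b:ℝ) - 2 + a0 := by
      have : (aM:ℝ) ≤ ((b - 2 + a0 : ℕ) : ℝ) := by exact_mod_cast hcase
      rw [Nat.cast_add, Nat.cast_sub hb] at this
      push_cast at this
      linarith
    have h01 : (σ 0 : ℝ) + 1 ≤ τ 0 := by exact_mod_cast hlt
    have hdiv : (aM:ℝ)/((b:ℝ)-1) - (a0:ℝ)/((b:ℝ)-1) ≤ ((b:ℝ)-2)/((b:ℝ)-1) := by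
      rw [div_sub_div_same]
      exact div_le_div_of_nonneg_right (by linarith) hbm1.le
    have hkey : ((b:ℝ)-2)/((b:ℝ)-1) + 1/((b:ℝ)-1) = 1 := by
      field_simp
      ring
    linarith
  · -- aM = b - 1 and a0 = 0
    have haM' : aM = b - 1 := by omega
    have ha0' : a0 = 0 := by omega
    rcases lt_or_ge (σ 0 + 1) (τ 0) with h2 | h2
    · -- gap of at least 2
      have h02 : (σ 0 : ℝ) + 2 ≤ τ 0 := by exact_mod_cast h2
      have hdiv : (aM:ℝ)/((b:ℝ)-1) - (a0:ℝ)/((b:ℝ)-1) ≤ 1 := by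
        rw [haM', ha0']
        have : ((b - 1 : ℕ) : ℝ) = (b:ℝ) - 1 := by
          rw [Nat.cast_sub (by omega)]; norm_num
        rw [this]
        simp [div_self (ne_of_gt hbm1)]
      have h1b : 1/((b:ℝ)-1) ≤ 1 := by
        have h2b : (2:ℝ) ≤ b := by exact_mod_cast hb
        rw [div_le_one hbm1]; linarith
      linarith
    · -- τ 0 = σ 0 + 1 : contradiction with strong separation
      exfalso
      have hτ0 : τ 0 = σ 0 + 1 := by omega
      have hmem1 : b - 1 ∈ A := haM' ▸ A.max'_mem hA
      have hmem0 : (0:ℕ) ∈ A := ha0' ▸ A.min'_mem hA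
      have hone : baseVal b (fun _ => b - 1) = 1 := by
        rw [baseVal_const hb]
        have : ((b - 1 : ℕ) : ℝ) = (b:ℝ) - 1 := by
          rw [Nat.cast_sub (by omega)]; norm_num
        rw [this, div_self (ne_of_gt hbm1)]
      have hzero : baseVal b (fun _ => (0:ℕ)) = 0 := by
        rw [baseVal_const hb]; simp
      have hd := hsep (σ 0) (hσ 0) (τ 0) (hτ 0) (by omega)
      have hy1 : ((σ 0 : ℝ) + 1) / b ∈
          (fun x : ℝ => ((σ 0 : ℝ) + x) / (b : ℝ)) '' limitSet b A := by
        exact ⟨1, hone ▸ const_mem_limitSet hb hmem1, rfl⟩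
      have hy2 : ((σ 0 : ℝ) + 1) / b ∈
          (fun x : ℝ => ((τ 0 : ℝ) + x) / (b : ℝ)) '' limitSet b A := by
        refine ⟨0, hzero ▸ const_mem_limitSet hb hmem0, ?_⟩
        simp only [add_zero]
        rw [hτ0]
        push_cast
        ring
      exact Set.disjoint_left.mp hd hy1 hy2

lemma sep_of_ne {b : ℕ} (hb : 2 ≤ b) {A : Finset ℕ} (hAb : A ⊆ Finset.range b)
    (hA : A.Nonempty) (hsep : StrongSep b A)
    {σ τ : ℕ → ℕ} (hσ : ∀ i, σ i ∈ A) (hτ : ∀ i, τ i ∈ A) (hne : σ 0 ≠ τ 0) :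
    1 / ((b:ℝ) * ((b:ℝ) - 1)) ≤ |baseVal b σ - baseVal b τ| := by
  rcases lt_or_gt_of_ne hne with h | h
  · rw [abs_sub_comm, abs_of_nonneg (by
      have := sep_of_lt hb hAb hA hsep hσ hτ h
      have hb0 : (0:ℝ) < b := by positivity
      have hbm1 : (0:ℝ) < (b:ℝ) - 1 := by
        have hb1 : (1:ℝ) < b := by exact_mod_cast hb.trans_lt' one_lt_two
        linarith
      nlinarith [one_div_pos.mpr (mul_pos hb0 hbm1)])]
    exact sep_of_lt hb hAb hA hsep hσ hτ h
  · rw [abs_of_nonneg (by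
      have := sep_of_lt hb hAb hA hsep hτ hσ h
      have hb0 : (0:ℝ) < b := by positivity
      have hbm1 : (0:ℝ) < (b:ℝ) - 1 := by
        have hb1 : (1:ℝ) < b := by exact_mod_cast hb.trans_lt' one_lt_two
        linarith
      nlinarith [one_div_pos.mpr (mul_pos hb0 hbm1)])]
    exact sep_of_lt hb hAb hA hsep hτ hσ h

lemma sep_pow {b : ℕ} (hb : 2 ≤ b) {A : Finset ℕ} (hAb : A ⊆ Finset.range b)
    (hA : A.Nonempty) (hsep : StrongSep b A) :
    ∀ (m : ℕ) (σ τ : ℕ → ℕ), (∀ i, σ i ∈ A) → (∀ i, τ i ∈ A) →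
      (∀ t, t < m → σ t = τ t) → σ m ≠ τ m →
      1 / ((b:ℝ) * ((b:ℝ) - 1)) / (b:ℝ) ^ m ≤ |baseVal b σ - baseVal b τ| := by
  intro m
  induction m with
  | zero =>
    intro σ τ hσ hτ _ hne
    simpa using sep_of_ne hb hAb hA hsep hσ hτ hne
  | succ m ih =>
    intro σ τ hσ hτ hag hne
    have hb0 : (0:ℝ) < b := by positivity
    have hmemb : ∀ i ∈ A, i < b := fun i hi => Finset.mem_range.mp (hAb hi)
    have hσb : ∀ i, σ i < b := fun i => hmemb _ (hσ i)
    have hτb : ∀ i, τ i < b := fun i => hmemb _ (hτ i)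
    have h0 : σ 0 = τ 0 := hag 0 (Nat.succ_pos _)
    have key := ih (fun t => σ (t+1)) (fun t => τ (t+1)) (fun i => hσ (i+1))
      (fun i => hτ (i+1)) (fun t ht => hag (t+1) (by omega)) hne
    rw [baseVal_shift hb hσb, baseVal_shift hb hτb, h0]
    have heq : ((τ 0 : ℝ) + baseVal b fun t => σ (t + 1)) / (b:ℝ) -
        ((τ 0 : ℝ) + baseVal b fun t => τ (t + 1)) / (b:ℝ) =
        ((baseVal b fun t => σ (t + 1)) - baseVal b fun t => τ (t + 1)) / (b:ℝ) := by
      ring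
    rw [heq, abs_div, abs_of_pos hb0, pow_succ, ← div_div]
    exact div_le_div_of_nonneg_right key hb0.le

lemma disagree {A : Finset ℕ} {ω τ : ℕ → ℕ}
    (hτA : ∀ t, τ t ∈ A) {i p n : ℕ} (hp : 0 < p)
    (hper : ∀ t, i ≤ t → τ (t + p) = τ t)
    (hdb : dbPrefix A n ω) (hkn : i + p + 1 ≤ A.card ^ n) :
    ∃ t, t < i + p + n ∧ ω t ≠ τ t := by
  by_contra hcon
  push_neg at hcon
  obtain ⟨j, hj, huniq⟩ := hdb (fun s => τ (i + s)) (fun s _ => hτA _)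
  have h1 : i + n ≤ A.card ^ n + n - 1 ∧ ∀ s < n, ω (i + s) = τ (i + s) := by
    constructor
    · omega
    · intro s hs
      exact hcon (i + s) (by omega)
  have h2 : (i + p) + n ≤ A.card ^ n + n - 1 ∧ ∀ s < n, ω (i + p + s) = τ (i + s) := by
    constructor
    · omega
    · intro s hs
      have e1 : ω (i + p + s) = τ (i + p + s) := hcon _ (by omega)
      have e2 : τ (i + p + s) = τ (i + s) := by
        have := hper (i + s) (by omega)
        rw [show i + p + s = i + s + p by ring, this]
      rw [e1, e2]
  have hji := huniq i h1
  have hjp := huniq (i + p) h2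
  omega

/-- Theorem: if the base-`b` IFS defined by `A` satisfies the strong separation
condition, then every `x ∈ F` whose base-`b` expansion is uniformly de Bruijn is badly
symbolically approximable. -/
theorem statement14 (b : ℕ) (hb : 2 ≤ b) (A : Finset ℕ) (hAb : A ⊆ Finset.range b)
    (k : ℕ) (hk : k = A.card) (hk2 : 2 ≤ k)
    (hsep : StrongSep b A)
    (δ : ℝ) (hδ : δ = Real.log k / Real.log b)
    (x : ℝ) (ω : ℕ → ℕ) (hωA : ∀ i, ω i ∈ A) (hω : UniformlyDeBruijn A ω)
    (hx : x = baseVal b ω) :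
    BadlySymbolicallyApproximable b A δ x := by
  classical
  have hA : A.Nonempty := Finset.card_pos.mp (by omega)
  obtain ⟨g, hg⟩ := hω
  have hb0 : (0:ℝ) < b := by positivity
  have hb1 : (1:ℝ) < b := by exact_mod_cast hb.trans_lt' one_lt_two
  have hb2 : (2:ℝ) ≤ b := by exact_mod_cast hb
  have hk1 : (1:ℝ) < k := by
    have : (2:ℝ) ≤ k := by exact_mod_cast hk2
    linarith
  have hk1' : 1 < k := hk2.trans_lt' one_lt_two
  set ε : ℝ := 1 / ((b:ℝ) * ((b:ℝ) - 1)) with hε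
  have hεpos : 0 < ε := by
    have : (0:ℝ) < (b:ℝ) - 1 := by linarith
    positivity
  have hlb : 0 < Real.log b := Real.log_pos hb1
  have hlk : 0 < Real.log k := Real.log_pos hk1
  set e : ℝ := Real.log b / Real.log k with he
  have hepos : 0 < e := div_pos hlb hlk
  have h1δ : 1 / δ = e := by rw [hδ, one_div_div]
  -- the two constants
  set κ1 : ℝ := ε / (2 * (2*(k:ℝ)) ^ e * (b:ℝ) ^ g) with hκ1
  set L1 : ℝ := Real.logb b ((b:ℝ) - 1) with hL1
  set D : ℝ := ((b:ℝ) - 1) * L1 ^ e with hD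
  set κ2 : ℝ := if 0 < D then ε * D / (b:ℝ) ^ (1 + Nat.clog k 2 + g) else 1 with hκ2
  have hκ1pos : 0 < κ1 := by
    have h2k : (0:ℝ) < (2*(k:ℝ)) ^ e := Real.rpow_pos_of_pos (by positivity) e
    rw [hκ1]
    positivity
  have hκ2pos : 0 < κ2 := by
    rw [hκ2]
    split_ifs with h
    · have : (0:ℝ) < (b:ℝ) ^ (1 + Nat.clog k 2 + g) := by positivity
      positivity
    · norm_num
  refine ⟨min κ1 κ2, lt_min hκ1pos hκ2pos, ?_⟩
  rintro r i p hp ⟨τ, hτA, hr, hper⟩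
  rw [h1δ]
  have hωb : ∀ t, ω t < b := fun t => Finset.mem_range.mp (hAb (hωA t))
  have hτb : ∀ t, τ t < b := fun t => Finset.mem_range.mp (hAb (hτA t))
  -- choose the de Bruijn order n
  set N := Nat.clog k (i+p+1) with hN
  have hNpos : 0 < N := Nat.clog_pos hk1' (by omega)
  have hlow : i + p + 1 ≤ k ^ N := Nat.le_pow_clog hk1' _
  have hupp : k ^ N ≤ k * (i + p) := by
    have h2 : k ^ (N - 1) < i + p + 1 := Nat.pow_pred_clog_lt_self hk1' (by omega)
    calc k ^ N = k * k ^ (N - 1) := by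
          rw [← pow_succ']
          congr 1
          omega
      _ ≤ k * (i + p) := Nat.mul_le_mul_left k (by omega)
  obtain ⟨n, hnB, hn1, hn2⟩ := hg (N - 1)
  obtain ⟨hnpos, hdb⟩ := hnB
  have hNn : N ≤ n := by omega
  have hnNg : n ≤ N + g := by omega
  have hkn : i + p + 1 ≤ A.card ^ n := by
    rw [← hk]
    exact hlow.trans (Nat.pow_le_pow_right (by omega) hNn)
  obtain ⟨t0, ht0, hne0⟩ := disagree hτA hp hper hdb hkn
  have hEx : ∃ t, ω t ≠ τ t := ⟨t0, hne0⟩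
  have hmne : ω (Nat.find hEx) ≠ τ (Nat.find hEx) := Nat.find_spec hEx
  have hmag : ∀ t, t < Nat.find hEx → ω t = τ t :=
    fun t ht => not_not.mp (Nat.find_min hEx ht)
  have hmlt : Nat.find hEx < i + p + N + g := by
    have := Nat.find_min' hEx hne0
    omega
  -- the key lower bound on |x - r|
  have hxr : ε / (b:ℝ) ^ (i + p + N + g) ≤ |x - r| := by
    rw [hx, hr]
    refine le_trans ?_ (sep_pow hb hAb hA hsep (Nat.find hEx) ω τ hωA hτA hmag hmne)
    exact div_le_div_of_nonneg_left hεpos.le (by positivity)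
      (pow_le_pow_right₀ hb1.le hmlt.le)
  -- analytic comparison
  set Q : ℝ := (b:ℝ)^i * ((b:ℝ)^p - 1) with hQ
  set L : ℝ := Real.logb b Q with hLdef
  have hbi0 : (0:ℝ) < (b:ℝ)^i := by positivity
  have hbp2 : (2:ℝ) ≤ (b:ℝ)^p :=
    le_trans hb2 (le_self_pow₀ hb1.le hp.ne')
  have hQpos : 0 < Q := by
    rw [hQ]
    have : (0:ℝ) < (b:ℝ)^p - 1 := by linarith
    positivity
  have hQ2 : (b:ℝ)^(i+p) ≤ 2*Q := by
    rw [hQ, pow_add, show (2:ℝ)*((b:ℝ)^i*((b:ℝ)^p-1)) = (b:ℝ)^i*(2*((b:ℝ)^p-1)) from by ring]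
    exact mul_le_mul_of_nonneg_left (by linarith) hbi0.le
  rcases Nat.lt_or_ge (i+p) 2 with hip | hip
  · -- the case i = 0, p = 1
    have hi0 : i = 0 := by omega
    have hp1 : p = 1 := by omega
    subst hi0 hp1
    have hQD : Q = (b:ℝ) - 1 := by rw [hQ]; norm_num
    have hLL1 : L = L1 := by rw [hLdef, hQD, hL1]
    rw [hQD, hLL1, ← hD]
    by_cases hDp : 0 < D
    · have hκ2val : κ2 = ε * D / (b:ℝ)^(1+Nat.clog k 2+g) := by
        rw [hκ2, if_pos hDp]
      have hNval : N = Nat.clog k 2 := by rw [hN]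
      calc min κ1 κ2 / D ≤ κ2 / D :=
            div_le_div_of_nonneg_right (min_le_right _ _) hDp.le
        _ = ε / (b:ℝ)^(1+Nat.clog k 2+g) := by
            rw [hκ2val]
            have hbp : ((b:ℝ)^(1+Nat.clog k 2+g)) ≠ 0 := by positivity
            field_simp
        _ ≤ |x - r| := by
            have hexp : 0 + 1 + N + g = 1 + Nat.clog k 2 + g := by
              rw [hNval]
            rw [← hexp]
            exact hxr
    · have hL1nn : (0:ℝ) ≤ L1 := Real.logb_nonneg hb1 (by linarith)
      have hDnn : (0:ℝ) ≤ D := by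
        rw [hD]
        exact mul_nonneg (by linarith) (Real.rpow_nonneg hL1nn e)
      have hD0 : D = 0 := le_antisymm (not_lt.mp hDp) hDnn
      rw [hD0, div_zero]
      exact abs_nonneg _
  · -- the main case i + p ≥ 2
    have hk0 : (0:ℝ) < (k:ℝ) := by linarith
    have hbpb : (b:ℝ) ≤ (b:ℝ)^p := le_self_pow₀ hb1.le hp.ne'
    have hQb : (b:ℝ)^(i+p) ≤ (b:ℝ)*Q := by
      rw [hQ, pow_add, show (b:ℝ)*((b:ℝ)^i*((b:ℝ)^p-1)) = (b:ℝ)^i*(((b:ℝ)^p-1)*(b:ℝ)) from by ring]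
      refine mul_le_mul_of_nonneg_left ?_ hbi0.le
      have h2b : ((b:ℝ)^p-1)*2 ≤ ((b:ℝ)^p-1)*(b:ℝ) :=
        mul_le_mul_of_nonneg_left hb2 (by linarith)
      linarith
    have hL1le : ((i:ℝ)+p) ≤ 1 + L := by
      have h1 : Real.logb b ((b:ℝ)^(i+p)) ≤ Real.logb b ((b:ℝ)*Q) :=
        Real.logb_le_logb_of_le hb1 (by positivity) hQb
      rw [← Real.rpow_natCast (b:ℝ) (i+p),
        Real.logb_rpow hb0 (by linarith : (b:ℝ) ≠ 1),
        Real.logb_mul (by linarith) (ne_of_gt hQpos),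
        Real.logb_self_eq_one hb1, ← hLdef] at h1
      push_cast at h1 ⊢
      linarith
    have hipR : (2:ℝ) ≤ (i:ℝ)+p := by exact_mod_cast hip
    have hLge1 : (1:ℝ) ≤ L := by linarith
    have hip2L : ((i:ℝ)+p) ≤ 2*L := by linarith
    have hLepos : 0 < L ^ e := Real.rpow_pos_of_pos (by linarith) e
    have hbk : (b:ℝ) = (k:ℝ) ^ e := by
      have hlog : Real.log k * e = Real.log b := by
        rw [he]
        field_simp
      rw [Real.rpow_def_of_pos hk0, hlog, Real.exp_log hb0]
    have h2k0 : (0:ℝ) < (2*(k:ℝ))^e := Real.rpow_pos_of_pos (by positivity) e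
    have hbN : (b:ℝ)^N ≤ (2*(k:ℝ))^e * L^e := by
      have h1 : (b:ℝ)^N = ((k:ℝ)^N : ℝ)^e := by
        rw [hbk, ← Real.rpow_natCast ((k:ℝ)^e) N, ← Real.rpow_mul hk0.le,
          ← Real.rpow_natCast (k:ℝ) N, ← Real.rpow_mul hk0.le, mul_comm]
      have h2 : ((k:ℝ)^N : ℝ) ≤ 2*(k:ℝ)*L := by
        have hc : ((k:ℝ)^N : ℝ) ≤ (k:ℝ)*((i:ℝ)+p) := by exact_mod_cast hupp
        have hc2 : (k:ℝ)*((i:ℝ)+p) ≤ (k:ℝ)*(2*L) := mul_le_mul_of_nonneg_left hip2L hk0.le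
        linarith only [hc, hc2]
      rw [h1, ← Real.mul_rpow (by positivity) (by linarith : (0:ℝ) ≤ L)]
      exact Real.rpow_le_rpow (by positivity) h2 hepos.le
    have hden : 0 < Q * L ^ e := mul_pos hQpos hLepos
    calc min κ1 κ2 / (Q * L ^ e) ≤ κ1 / (Q * L ^ e) :=
          div_le_div_of_nonneg_right (min_le_left _ _) hden.le
      _ ≤ ε / (b:ℝ)^(i+p+N+g) := by
          rw [div_le_div_iff₀ hden (by positivity)]
          have hE : (b:ℝ)^(i+p+N+g) = (b:ℝ)^(i+p) * (b:ℝ)^N * (b:ℝ)^g := by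
            rw [← pow_add, ← pow_add]
          rw [hE]
          have key : (b:ℝ)^(i+p) * (b:ℝ)^N * (b:ℝ)^g ≤
              (2*Q) * ((2*(k:ℝ))^e * L^e) * (b:ℝ)^g := by
            refine mul_le_mul_of_nonneg_right ?_ (by positivity)
            exact mul_le_mul hQ2 hbN (by positivity) (by positivity)
          calc κ1 * ((b:ℝ)^(i+p) * (b:ℝ)^N * (b:ℝ)^g)
              ≤ κ1 * ((2*Q) * ((2*(k:ℝ))^e * L^e) * (b:ℝ)^g) :=
                mul_le_mul_of_nonneg_left key hκ1pos.le
            _ = ε * (Q * L^e) := by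
                rw [hκ1]
                have hbg : ((b:ℝ)^g) ≠ 0 := by positivity
                have hbm : (b:ℝ) - 1 ≠ 0 := by linarith
                have hbne : (b:ℝ) ≠ 0 := by linarith
                field_simp
      _ ≤ |x - r| := hxr
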